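/- Let q ≥ 1, let f^h: ℝ^{n_h} → ℝ and f^H: ℝ^{n_H} → ℝ be q-times continuously differentiable, let P: ℝ^{n_H} → ℝ^{n_h} be linear, let x_k ∈ ℝ^{n_h} and x₀ ∈ ℝ^{n_H}, and let m^H_q be the corrected lower-level model. Then for every i with 1 ≤ i ≤ q and every s ∈ ℝ^{n_H}, the i-th derivative at s = 0 of the map s ↦ m^H_q(x₀, s), applied to i copies of s, equals D^i f^h(x_k)[Ps,…,Ps] (i copies of Ps); in particular the model m^H_q and the function f^h have coherent derivatives up to order q at x₀ and x_k. -/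

import Mathlib

open scoped BigOperators

section AuxLemmas

variable {E F : Type*} [NormedAddCommGroup E] [NormedSpace ℝ E]
  [NormedAddCommGroup F] [NormedSpace ℝ F]

private lemma aux_fderiv_comp_const_add (g : E → F) (c y : E) :
    fderiv ℝ (fun s => g (c + s)) y = fderiv ℝ g (c + y) := by
  by_cases h : DifferentiableAt ℝ g (c + y)
  · have h1 : HasFDerivAt (fun s => g (c + s)) (fderiv ℝ g (c + y)) y := by
      have := h.hasFDerivAt.comp y ((hasFDerivAt_id y).const_add c)
      simpa [Function.comp_def] using this
    exact h1.fderiv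
  · have h2 : ¬ DifferentiableAt ℝ (fun s => g (c + s)) y := by
      intro hc
      have h3 : DifferentiableAt ℝ ((fun s => g (c + s)) ∘ (fun t => -c + t)) (c + y) :=
        DifferentiableAt.comp _ (by simpa using hc) (differentiableAt_id.const_add (-c))
      have h4 : ((fun s => g (c + s)) ∘ (fun t => -c + t)) = g := by
        funext t; simp
      rw [h4] at h3
      exact h h3
    rw [fderiv_zero_of_not_differentiableAt h, fderiv_zero_of_not_differentiableAt h2]

private lemma aux_iteratedFDeriv_comp_const_add (i : ℕ) (g : E → F) (c y : E) :
    iteratedFDeriv ℝ i (fun s => g (c + s)) y = iteratedFDeriv ℝ i g (c + y) := by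
  induction i generalizing g y with
  | zero => ext m; simp
  | succ n ih =>
    rw [iteratedFDeriv_succ_eq_comp_left, iteratedFDeriv_succ_eq_comp_left]
    simp only [Function.comp_apply]
    congr 1
    have hfun : iteratedFDeriv ℝ n (fun s => g (c + s)) = fun z => iteratedFDeriv ℝ n g (c + z) :=
      funext fun z => ih g z
    rw [hfun, aux_fderiv_comp_const_add (iteratedFDeriv ℝ n g) c y]

private lemma aux_diag_iteratedFDeriv {j : ℕ}
    (T : ContinuousMultilinearMap ℝ (fun _ : Fin j => E) ℝ) (i : ℕ) (s : E) :
    iteratedFDeriv ℝ i (fun x => T (fun _ => x)) 0 (fun _ => s) =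
      if i = j then (Nat.factorial i : ℝ) * T (fun _ => s) else 0 := by
  classical
  set p : FormalMultilinearSeries ℝ E ℝ :=
    fun n => if h : n = j then (h ▸ T) else 0 with hp
  have heval : ∀ (n : ℕ) (h : n = j) (y : E), p n (fun _ => y) = T (fun _ => y) := by
    intro n h y
    subst h
    simp [hp]
  have hzero : ∀ (n : ℕ), n ≠ j → p n = 0 := fun n h => dif_neg h
  have hball : HasFiniteFPowerSeriesOnBall (fun x => T (fun _ => x)) p 0 (j + 1) ⊤ := by
    apply HasFiniteFPowerSeriesOnBall.mk' (fun m hm => hzero m (by omega)) ENNReal.zero_lt_top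
    intro y _
    rw [Finset.sum_eq_single_of_mem j (by simp [Nat.lt_succ_self])]
    · rw [heval j rfl y, zero_add]
    · intro m _ hm
      rw [hzero m hm]
      rfl
  have key := hball.toHasFPowerSeriesOnBall.factorial_smul s i
  by_cases hij : i = j
  · rw [if_pos hij, ← key, heval i hij s, nsmul_eq_mul]
  · rw [if_neg hij, ← key, hzero i hij]
    simp

end AuxLemmas

/-- The corrected lower-level model of order `q`:
`m^H_q(x₀,s) = f^H(x₀+s) + ∑_{i=1}^{q} (1/i!) ( Dⁱf^h(x_k)[Ps,…,Ps] − Dⁱf^H(x₀)[s,…,s] )`. -/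
noncomputable def lowerModel {nh nH : ℕ} (q : ℕ)
    (fh : EuclideanSpace ℝ (Fin nh) → ℝ) (fH : EuclideanSpace ℝ (Fin nH) → ℝ)
    (P : EuclideanSpace ℝ (Fin nH) →L[ℝ] EuclideanSpace ℝ (Fin nh))
    (xk : EuclideanSpace ℝ (Fin nh)) (x0 s : EuclideanSpace ℝ (Fin nH)) : ℝ :=
  fH (x0 + s) + ∑ i ∈ Finset.Icc 1 q,
    (1 / (Nat.factorial i) : ℝ) *
      (iteratedFDeriv ℝ i fh xk (fun _ => P s) - iteratedFDeriv ℝ i fH x0 (fun _ => s))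

theorem lowerModel_derivative_coherence {nh nH : ℕ} (q : ℕ) (hq : 1 ≤ q)
    (fh : EuclideanSpace ℝ (Fin nh) → ℝ) (fH : EuclideanSpace ℝ (Fin nH) → ℝ)
    (hfh : ContDiff ℝ q fh) (hfH : ContDiff ℝ q fH)
    (P : EuclideanSpace ℝ (Fin nH) →L[ℝ] EuclideanSpace ℝ (Fin nh))
    (xk : EuclideanSpace ℝ (Fin nh)) (x0 : EuclideanSpace ℝ (Fin nH)) :
    ∀ i : ℕ, 1 ≤ i → i ≤ q → ∀ s : EuclideanSpace ℝ (Fin nH),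
      iteratedFDeriv ℝ i (fun t => lowerModel q fh fH P xk x0 t) 0 (fun _ => s) =
        iteratedFDeriv ℝ i fh xk (fun _ => P s) := by
  intro i hi1 hiq s
  classical
  -- The `j`-th correction term, as a continuous multilinear map evaluated on the diagonal.
  let T : (j : ℕ) → ContinuousMultilinearMap ℝ (fun _ : Fin j => EuclideanSpace ℝ (Fin nH)) ℝ :=
    fun j => (1 / (Nat.factorial j) : ℝ) •
      ((iteratedFDeriv ℝ j fh xk).compContinuousLinearMap (fun _ => P) -
        iteratedFDeriv ℝ j fH x0)
  have hT : ∀ (j : ℕ) (t : EuclideanSpace ℝ (Fin nH)),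
      T j (fun _ => t) = (1 / (Nat.factorial j) : ℝ) *
        (iteratedFDeriv ℝ j fh xk (fun _ => P t) - iteratedFDeriv ℝ j fH x0 (fun _ => t)) := by
    intro j t
    simp [T, smul_eq_mul]
  have hmodel : (fun t => lowerModel q fh fH P xk x0 t) =
      (fun t => fH (x0 + t)) + fun t => ∑ j ∈ Finset.Icc 1 q, T j (fun _ => t) := by
    funext t
    simp only [lowerModel, Pi.add_apply, hT]
  have hiq' : (i : WithTop ℕ∞) ≤ (q : WithTop ℕ∞) := by exact_mod_cast hiq
  have hC1 : ContDiff ℝ i (fun t => fH (x0 + t)) :=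
    (hfH.of_le hiq').comp (contDiff_const.add contDiff_id)
  have hCj : ∀ j : ℕ, ContDiff ℝ i
      (fun t : EuclideanSpace ℝ (Fin nH) => T j (fun _ => t)) := fun j =>
    (T j).contDiff.comp (contDiff_pi.2 fun _ => contDiff_id)
  have hC2 : ContDiff ℝ i
      (fun t : EuclideanSpace ℝ (Fin nH) => ∑ j ∈ Finset.Icc 1 q, T j (fun _ => t)) :=
    ContDiff.sum fun j _ => hCj j
  rw [hmodel, iteratedFDeriv_add_apply hC1.contDiffAt hC2.contDiffAt]
  have htrans : iteratedFDeriv ℝ i (fun t => fH (x0 + t)) 0 (fun _ => s) =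
      iteratedFDeriv ℝ i fH x0 (fun _ => s) := by
    rw [aux_iteratedFDeriv_comp_const_add i fH x0 0, add_zero]
  have hsum : iteratedFDeriv ℝ i
      (fun t : EuclideanSpace ℝ (Fin nH) => ∑ j ∈ Finset.Icc 1 q, T j (fun _ => t)) 0
        (fun _ => s) =
      ∑ j ∈ Finset.Icc 1 q,
        iteratedFDeriv ℝ i (fun t : EuclideanSpace ℝ (Fin nH) => T j (fun _ => t)) 0
          (fun _ => s) := by
    rw [iteratedFDeriv_sum fun j _ => hCj j]
    simp
  rw [ContinuousMultilinearMap.add_apply, htrans, hsum]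
  have hterm : ∀ j ∈ Finset.Icc 1 q,
      iteratedFDeriv ℝ i (fun t : EuclideanSpace ℝ (Fin nH) => T j (fun _ => t)) 0
          (fun _ => s) =
        if i = j then (Nat.factorial i : ℝ) * T j (fun _ => s) else 0 := fun j _ =>
    aux_diag_iteratedFDeriv (T j) i s
  rw [Finset.sum_congr rfl hterm,
    Finset.sum_eq_single_of_mem i (Finset.mem_Icc.2 ⟨hi1, hiq⟩)
      (fun j _ hj => if_neg (fun h => hj h.symm)), if_pos rfl, hT]
  have hfact : (Nat.factorial i : ℝ) ≠ 0 := Nat.cast_ne_zero.2 (Nat.factorial_ne_zero i)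
  field_simp
  ring
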